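/- Let a be a node or focus of the holomorphic flow ẋ = F(x) with basin 𝒩. Then 𝒩 is simply connected. -/

import Mathlib

open Set Topology Filter

noncomputable section

/-- A (complete) flow of the planar vector field given by `F : ℂ → ℂ`,
i.e. a solution family of `ẋ = F(x)`. -/
structure HoloFlow (F : ℂ → ℂ) where
  Φ : ℝ → ℂ → ℂ
  init : ∀ x, Φ 0 x = x
  add : ∀ s t x, Φ (s + t) x = Φ s (Φ t x)
  hasDeriv : ∀ x t, HasDerivAt (fun τ => Φ τ x) (F (Φ t x)) t

/-- The bounded interior region determined by a planar set `Γ` (for a Jordan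
curve `Γ`, this is `Int Γ` of the Jordan curve theorem): the union of the
bounded connected components of the complement. -/
def interiorRegion (Γ : Set ℂ) : Set ℂ :=
  {z | z ∉ Γ ∧ Bornology.IsBounded (connectedComponentIn Γᶜ z)}

/-- The unbounded exterior region determined by a planar set `Γ`. -/
def exteriorRegion (Γ : Set ℂ) : Set ℂ :=
  {z | z ∉ Γ ∧ ¬ Bornology.IsBounded (connectedComponentIn Γᶜ z)}

/-- `J` is a closed Jordan curve: a continuous injective image of the unit circle. -/
def IsJordanCurve (J : Set ℂ) : Prop :=
  ∃ f : ℂ → ℂ, ContinuousOn f (Metric.sphere (0:ℂ) 1) ∧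
    Set.InjOn f (Metric.sphere (0:ℂ) 1) ∧ f '' (Metric.sphere (0:ℂ) 1) = J

/-- `a` is an equilibrium of order `m` of `F`. -/
def HasOrder (F : ℂ → ℂ) (a : ℂ) (m : ℕ) : Prop :=
  (∀ k < m, iteratedDeriv k F a = 0) ∧ iteratedDeriv m F a ≠ 0

namespace HoloFlow

variable {F : ℂ → ℂ} (φ : HoloFlow F)

/-- The orbit `Γ(x)` through `x`. -/
def orbit (x : ℂ) : Set ℂ := Set.range fun t => φ.Φ t x

/-- A set is flow-invariant. -/
def Invariant (A : Set ℂ) : Prop := ∀ x ∈ A, ∀ t : ℝ, φ.Φ t x ∈ A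

/-- The positive limit set `w₊(Γ(x))`. -/
def omegaP (x : ℂ) : Set ℂ :=
  {y | ∃ u : ℕ → ℝ, Tendsto u atTop atTop ∧
    Tendsto (fun n => φ.Φ (u n) x) atTop (nhds y)}

/-- The negative limit set `w₋(Γ(x))`. -/
def omegaM (x : ℂ) : Set ℂ :=
  {y | ∃ u : ℕ → ℝ, Tendsto u atTop atBot ∧
    Tendsto (fun n => φ.Φ (u n) x) atTop (nhds y)}

/-- `Γ(x)` is a closed periodic (nonconstant) orbit. -/
def IsPeriodicOrbit (x : ℂ) : Prop := F x ≠ 0 ∧ ∃ T > 0, φ.Φ T x = x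

/-- `a` is a center: an equilibrium all of whose nearby orbits are closed
periodic orbits surrounding `a`. -/
def IsCenter (a : ℂ) : Prop :=
  F a = 0 ∧ ∃ ε > 0, ∀ x ∈ Metric.ball a ε \ {a},
    φ.IsPeriodicOrbit x ∧ a ∈ interiorRegion (φ.orbit x)

/-- The period annulus (center basin) `𝒱` of the center `a`. -/
def periodAnnulus (a : ℂ) : Set ℂ :=
  {a} ∪ {x | φ.IsPeriodicOrbit x ∧ a ∈ interiorRegion (φ.orbit x)}

/-- `Γ(x)` is a homoclinic orbit at `a`. -/
def Homoclinic (a x : ℂ) : Prop :=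
  F x ≠ 0 ∧ φ.omegaP x = {a} ∧ φ.omegaM x = {a}

/-- `Γ(x)` is a sector-forming orbit at `a`: homoclinic, and every orbit
through the interior of the Jordan curve `Γ(x) ∪ {a}` is homoclinic at `a`. -/
def SectorForming (a x : ℂ) : Prop :=
  φ.Homoclinic a x ∧ ∀ z ∈ interiorRegion (φ.orbit x ∪ {a}), φ.Homoclinic a z

/-- The global elliptic sector `𝒮(Ξ)` at `a` generated by the sector-forming
orbit `Ξ = Γ(x₀)`. -/
def globalSector (a x₀ : ℂ) : Set ℂ :=
  φ.orbit x₀ ∪ interiorRegion (φ.orbit x₀ ∪ {a}) ∪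
    {x | φ.Homoclinic a x ∧ φ.orbit x₀ ⊆ interiorRegion (φ.orbit x ∪ {a})}

/-- The stable basin of attraction of `a`. -/
def basinP (a : ℂ) : Set ℂ := {x | φ.omegaP x = {a}}

/-- The unstable basin of repulsion of `a`. -/
def basinM (a : ℂ) : Set ℂ := {x | φ.omegaM x = {a}}

/-- `a` is an attracting node or focus. -/
def IsNodeFocusP (a : ℂ) : Prop :=
  F a = 0 ∧ deriv F a ≠ 0 ∧ (deriv F a).re ≠ 0 ∧
    ∃ ε > 0, Metric.ball a ε ⊆ φ.basinP a

/-- `a` is a repelling node or focus. -/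
def IsNodeFocusM (a : ℂ) : Prop :=
  F a = 0 ∧ deriv F a ≠ 0 ∧ (deriv F a).re ≠ 0 ∧
    ∃ ε > 0, Metric.ball a ε ⊆ φ.basinM a

/-- The heteroclinic region `ℋ` between `ap` and `am`. -/
def hetRegion (ap am : ℂ) : Set ℂ :=
  {x | φ.omegaP x = {ap} ∧ φ.omegaM x = {am}}

end HoloFlow

namespace HoloFlow

open Metric Real

variable {F : ℂ → ℂ} (φ : HoloFlow F)

lemma contT (x : ℂ) : Continuous fun t => φ.Φ t x :=
  continuous_iff_continuousAt.2 fun t => (φ.hasDeriv x t).continuousAt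

/-- The time-reversed flow. -/
def rev : HoloFlow (fun z => -F z) where
  Φ t x := φ.Φ (-t) x
  init x := by simpa using φ.init x
  add s t x := by show φ.Φ (-(s+t)) x = φ.Φ (-s) (φ.Φ (-t) x); rw [neg_add]; exact φ.add _ _ _
  hasDeriv x t := by
    have h : HasDerivAt (fun τ : ℝ => φ.Φ (-τ) x) ((-1 : ℝ) • F (φ.Φ (-t) x)) t :=
      (φ.hasDeriv x (-t)).scomp t (hasDerivAt_neg t)
    simpa using h

lemma rev_apply (t : ℝ) (x : ℂ) : φ.rev.Φ t x = φ.Φ (-t) x := rfl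

/-- A continuous-induction ("bootstrap") principle on `[0, T]`. -/
lemma bootstrap {d : ℝ → ℝ} (hd : Continuous d) {T B b : ℝ} (hT : 0 ≤ T) (hb : b < B)
    (h0 : d 0 ≤ b)
    (key : ∀ t ∈ Set.Icc (0:ℝ) T, (∀ s ∈ Set.Icc (0:ℝ) t, d s ≤ B) →
      ∀ s ∈ Set.Icc (0:ℝ) t, d s ≤ b) :
    ∀ s ∈ Set.Icc (0:ℝ) T, d s ≤ b := by
  set A : Set ℝ := {t | t ∈ Set.Icc (0:ℝ) T ∧ ∀ s ∈ Set.Icc (0:ℝ) t, d s ≤ B} with hA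
  have hA0 : (0:ℝ) ∈ A := by
    refine ⟨⟨le_rfl, hT⟩, ?_⟩
    intro s hs
    have : s = 0 := le_antisymm hs.2 hs.1
    subst this; exact h0.trans hb.le
  have hAbdd : BddAbove A := ⟨T, fun t ht => ht.1.2⟩
  set τ := sSup A with hτ
  have hτ0 : 0 ≤ τ := le_csSup hAbdd hA0
  have hτT : τ ≤ T := csSup_le ⟨0, hA0⟩ fun t ht => ht.1.2
  have hτA : τ ∈ A := by
    refine ⟨⟨hτ0, hτT⟩, ?_⟩
    intro s hs
    have hlt : ∀ u, 0 ≤ u → u < τ → d u ≤ B := by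
      intro u hu0 huτ
      obtain ⟨t, htA, hut⟩ := exists_lt_of_lt_csSup ⟨0, hA0⟩ huτ
      exact htA.2 u ⟨hu0, hut.le⟩
    rcases lt_or_eq_of_le hs.2 with h | h
    · exact hlt s hs.1 h
    · rcases eq_or_lt_of_le hτ0 with h0' | h0'
      · rw [h, ← h0']; exact h0.trans hb.le
      · have hC : IsClosed {u : ℝ | d u ≤ B} := isClosed_le hd continuous_const
        have hsub : Set.Ico (0:ℝ) τ ⊆ {u : ℝ | d u ≤ B} := fun u hu => hlt u hu.1 hu.2
        have hτcl : τ ∈ closure (Set.Ico (0:ℝ) τ) := by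
          rw [closure_Ico (ne_of_lt h0')]
          exact ⟨hτ0, le_rfl⟩
        rw [h]
        have := (closure_mono hsub) hτcl
        rwa [hC.closure_eq] at this
  have hτb : ∀ s ∈ Set.Icc (0:ℝ) τ, d s ≤ b := key τ hτA.1 hτA.2
  have hτeq : τ = T := by
    by_contra hne
    have hτltT : τ < T := lt_of_le_of_ne hτT hne
    have hdτ : d τ < B := lt_of_le_of_lt (hτb τ ⟨hτ0, le_rfl⟩) hb
    have hopen : IsOpen {u : ℝ | d u < B} := isOpen_lt hd continuous_const
    obtain ⟨η, hη, hball⟩ := Metric.isOpen_iff.1 hopen τ hdτ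
    set τ' := min (τ + η / 2) T with hτ'
    have hττ' : τ < τ' := lt_min (by linarith) hτltT
    have hτ'A : τ' ∈ A := by
      refine ⟨⟨hτ0.trans hττ'.le, min_le_right _ _⟩, ?_⟩
      intro s hs
      rcases le_or_gt s τ with h | h
      · exact hτA.2 s ⟨hs.1, h⟩
      · have : dist s τ < η := by
          rw [Real.dist_eq, abs_of_pos (by linarith)]
          have := hs.2.trans (min_le_left _ _)
          linarith
        exact (hball this).le
    exact absurd (le_csSup hAbdd hτ'A) (not_le.2 hττ')
  rw [hτeq] at hτb
  exact hτb

lemma lipOnBall (hF : Differentiable ℂ F) (r : ℝ) :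
    ∃ K : NNReal, LipschitzOnWith K F (closedBall (0:ℂ) r) := by
  rcases lt_or_ge r 0 with hr | hr
  · refine ⟨1, ?_⟩
    rw [closedBall_eq_empty.2 hr]
    exact lipschitzOnWith_empty _ _
  · have hcd : ContDiff ℝ 1 F := (hF.contDiff (n := 1)).restrict_scalars ℝ
    have hfc : Continuous fun z : ℂ => ‖fderiv ℝ F z‖ := (hcd.continuous_fderiv one_ne_zero).norm
    obtain ⟨z₀, hz₀, hmax⟩ := (isCompact_closedBall (0:ℂ) r).exists_isMaxOn
      (Metric.nonempty_closedBall.2 hr) hfc.continuousOn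
    refine ⟨‖fderiv ℝ F z₀‖.toNNReal, ?_⟩
    refine Convex.lipschitzOnWith_of_nnnorm_fderiv_le (fun x _ => (hF x).restrictScalars ℝ) ?_
      (convex_closedBall _ _)
    intro x hx
    rw [← norm_toNNReal]
    exact Real.toNNReal_mono (hmax hx)

lemma forward_est (hF : Differentiable ℂ F) (x : ℂ) (T : ℝ) (hT : 0 ≤ T) :
    ∃ δ > 0, ∃ K : ℝ, 0 ≤ K ∧
      ∀ y, dist y x ≤ δ → ∀ t ∈ Set.Icc (0:ℝ) T,
        dist (φ.Φ t y) (φ.Φ t x) ≤ dist y x * exp (K * t) := by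
  obtain ⟨t₀, ht₀, hmax⟩ := (isCompact_Icc (a := (0:ℝ)) (b := T)).exists_isMaxOn
    ⟨0, le_refl 0, hT⟩ ((continuous_norm.comp (φ.contT x)).continuousOn)
  set M : ℝ := ‖φ.Φ t₀ x‖ with hM
  set r : ℝ := M + 2 with hr
  obtain ⟨K, hK⟩ := lipOnBall hF r
  set δ : ℝ := (1/2) * exp (-((K:ℝ) * T)) with hδ
  have hδpos : 0 < δ := by positivity
  have hδle : δ ≤ 1/2 := by
    rw [hδ]
    have h1 : exp (-((K:ℝ) * T)) ≤ 1 := Real.exp_le_one_iff.2 (neg_nonpos.2 (mul_nonneg K.2 hT))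
    linarith
  refine ⟨δ, hδpos, K, K.2, ?_⟩
  intro y hy
  set d : ℝ → ℝ := fun s => dist (φ.Φ s y) (φ.Φ s x) with hd
  have hdc : Continuous d := (φ.contT y).dist (φ.contT x)
  have hd0 : d 0 = dist y x := by simp [hd, φ.init]
  -- Gronwall step
  have gron : ∀ t ∈ Set.Icc (0:ℝ) T, (∀ s ∈ Set.Icc (0:ℝ) t, d s ≤ 1) →
      ∀ s ∈ Set.Icc (0:ℝ) t, d s ≤ dist y x * exp ((K:ℝ) * s) := by
    intro t ht hin
    have hsub : Set.Icc (0:ℝ) t ⊆ Set.Icc 0 T := Set.Icc_subset_Icc le_rfl ht.2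
    have hmemy : ∀ s ∈ Set.Ico (0:ℝ) t, φ.Φ s y ∈ closedBall (0:ℂ) r := by
      intro s hs
      have h1 : d s ≤ 1 := hin s ⟨hs.1, hs.2.le⟩
      have h2 : ‖φ.Φ s x‖ ≤ M := hmax (hsub ⟨hs.1, hs.2.le⟩)
      have h3 : ‖φ.Φ s y‖ ≤ ‖φ.Φ s x‖ + dist (φ.Φ s y) (φ.Φ s x) := by
        rw [dist_eq_norm]
        have := norm_add_le (φ.Φ s x) (φ.Φ s y - φ.Φ s x)
        simpa using this
      rw [mem_closedBall, dist_zero_right]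
      calc ‖φ.Φ s y‖ ≤ M + 1 := by simpa [hd] using h3.trans (by linarith)
        _ ≤ r := by rw [hr]; linarith
    have hmemx : ∀ s ∈ Set.Ico (0:ℝ) t, φ.Φ s x ∈ closedBall (0:ℂ) r := by
      intro s hs
      have h2 : ‖φ.Φ s x‖ ≤ M := hmax (hsub ⟨hs.1, hs.2.le⟩)
      rw [mem_closedBall, dist_zero_right, hr]
      linarith
    have := dist_le_of_trajectories_ODE_of_mem (v := fun _ z => F z)
      (s := fun _ => closedBall (0:ℂ) r) (K := K)
      (f := fun s => φ.Φ s y) (g := fun s => φ.Φ s x) (a := 0) (b := t) (δ := dist y x)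
      (fun _ _ => hK) (φ.contT y).continuousOn
      (fun s _ => (φ.hasDeriv y s).hasDerivWithinAt) hmemy
      (φ.contT x).continuousOn (fun s _ => (φ.hasDeriv x s).hasDerivWithinAt) hmemx
      (by simp [φ.init])
    intro s hs
    simpa [hd] using this s hs
  have key : ∀ t ∈ Set.Icc (0:ℝ) T, (∀ s ∈ Set.Icc (0:ℝ) t, d s ≤ 1) →
      ∀ s ∈ Set.Icc (0:ℝ) t, d s ≤ 1/2 := by
    intro t ht hin s hs
    have h1 := gron t ht hin s hs
    have h2 : exp ((K:ℝ) * s) ≤ exp ((K:ℝ) * T) :=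
      Real.exp_le_exp.2 (mul_le_mul_of_nonneg_left (hs.2.trans ht.2) K.2)
    calc d s ≤ dist y x * exp ((K:ℝ) * s) := h1
      _ ≤ δ * exp ((K:ℝ) * T) := by
          apply mul_le_mul hy h2 (Real.exp_pos _).le hδpos.le
      _ = 1/2 := by
          rw [hδ, Real.exp_neg]
          field_simp
  have hboot := bootstrap hdc hT (by norm_num : (1:ℝ)/2 < 1) (by rw [hd0]; exact hy.trans hδle) key
  exact gron T ⟨hT, le_rfl⟩ (fun s hs => (hboot s hs).trans (by norm_num))

lemma flow_cont (hF : Differentiable ℂ F) : Continuous fun p : ℝ × ℂ => φ.Φ p.1 p.2 := by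
  rw [continuous_iff_continuousAt]
  rintro ⟨t₀, x₀⟩
  set T : ℝ := |t₀| + 1 with hTdef
  have hT : 0 ≤ T := by positivity
  obtain ⟨δ₁, hδ₁, K₁, hK₁, H₁⟩ := φ.forward_est hF x₀ T hT
  obtain ⟨δ₂, hδ₂, K₂, hK₂, H₂⟩ := (φ.rev).forward_est hF.neg x₀ T hT
  set E : ℝ := exp (K₁ * T) + exp (K₂ * T) with hE
  have hEpos : 0 < E := by positivity
  have key : ∀ y, dist y x₀ ≤ min δ₁ δ₂ → ∀ t : ℝ, |t| ≤ T →
      dist (φ.Φ t y) (φ.Φ t x₀) ≤ dist y x₀ * E := by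
    intro y hy t ht
    rcases le_or_gt 0 t with h0 | h0
    · have h1 := H₁ y (hy.trans (min_le_left _ _)) t ⟨h0, by rwa [abs_of_nonneg h0] at ht⟩
      refine h1.trans ?_
      have : exp (K₁ * t) ≤ E := by
        rw [hE]
        have : exp (K₁ * t) ≤ exp (K₁ * T) :=
          Real.exp_le_exp.2 (mul_le_mul_of_nonneg_left ((le_abs_self t).trans ht) hK₁)
        nlinarith [Real.exp_pos (K₂ * T)]
      exact mul_le_mul_of_nonneg_left this dist_nonneg
    · have hrev : ∀ z, φ.Φ t z = φ.rev.Φ (-t) z := by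
        intro z; rw [rev_apply, neg_neg]
      have h1 := H₂ y (hy.trans (min_le_right _ _)) (-t)
        ⟨by linarith, by have := neg_abs_le t; linarith⟩
      rw [hrev y, hrev x₀]
      refine h1.trans ?_
      have : exp (K₂ * (-t)) ≤ E := by
        rw [hE]
        have h2 : exp (K₂ * (-t)) ≤ exp (K₂ * T) := by
          apply Real.exp_le_exp.2
          apply mul_le_mul_of_nonneg_left _ hK₂
          have := neg_abs_le t; linarith
        nlinarith [Real.exp_pos (K₁ * T)]
      exact mul_le_mul_of_nonneg_left this dist_nonneg
  rw [Metric.continuousAt_iff]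
  intro ε hε
  have htc : ContinuousAt (fun t => φ.Φ t x₀) t₀ := (φ.contT x₀).continuousAt
  rw [Metric.continuousAt_iff] at htc
  obtain ⟨η, hη, hηt⟩ := htc (ε/2) (by positivity)
  refine ⟨min (min 1 η) (min (min δ₁ δ₂) (ε/(2*E))), by positivity, ?_⟩
  rintro ⟨t, y⟩ hlt
  rw [Prod.dist_eq, max_lt_iff] at hlt
  obtain ⟨hlt1, hlt2⟩ := hlt
  have htt₀ : dist t t₀ < 1 := lt_of_lt_of_le hlt1 ((min_le_left _ _).trans (min_le_left _ _))
  have htη : dist t t₀ < η := lt_of_lt_of_le hlt1 ((min_le_left _ _).trans (min_le_right _ _))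
  have hyδ : dist y x₀ < min δ₁ δ₂ := lt_of_lt_of_le hlt2 ((min_le_right _ _).trans (min_le_left _ _))
  have hyε : dist y x₀ < ε/(2*E) := lt_of_lt_of_le hlt2 ((min_le_right _ _).trans (min_le_right _ _))
  have htT : |t| ≤ T := by
    rw [hTdef]
    have : |t - t₀| < 1 := by rwa [Real.dist_eq] at htt₀
    have h2 := abs_sub_abs_le_abs_sub t t₀
    linarith
  calc dist (φ.Φ t y) (φ.Φ t₀ x₀)
      ≤ dist (φ.Φ t y) (φ.Φ t x₀) + dist (φ.Φ t x₀) (φ.Φ t₀ x₀) := dist_triangle _ _ _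
    _ < ε/2 + ε/2 := by
        apply add_lt_add_of_le_of_lt
        · refine (key y hyδ.le t htT).trans ?_
          have := mul_le_mul_of_nonneg_right hyε.le hEpos.le
          calc dist y x₀ * E ≤ ε/(2*E) * E := mul_le_mul_of_nonneg_right hyε.le hEpos.le
            _ = ε/2 := by field_simp
        · exact hηt htη
    _ = ε := by ring

lemma attract (hF : Differentiable ℂ F) {a : ℂ} (ha : F a = 0) (hre : (deriv F a).re < 0) :
    ∃ ε > 0, ∃ lam : ℝ, lam < 0 ∧ ∀ x, dist x a ≤ ε → ∀ t : ℝ, 0 ≤ t →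
      dist (φ.Φ t x) a ≤ dist x a * exp (lam * t) := by
  set c := deriv F a with hc
  set η : ℝ := -c.re / 2 with hηdef
  have hηpos : 0 < η := by rw [hηdef]; linarith
  set lam : ℝ := c.re / 2 with hlamdef
  have hlam : lam < 0 := by rw [hlamdef]; linarith
  have hclam : c.re + η = lam := by rw [hηdef, hlamdef]; ring
  have hder : HasDerivAt F c a := (hF a).hasDerivAt
  rw [hasDerivAt_iff_isLittleO] at hder
  have hsmall := hder.def hηpos
  rw [Metric.eventually_nhds_iff] at hsmall
  obtain ⟨ε₀, hε₀pos, hball⟩ := hsmall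
  have herr : ∀ z : ℂ, dist z a ≤ ε₀/2 → ‖F z - (z - a) * c‖ ≤ η * ‖z - a‖ := by
    intro z hz
    have := hball (show dist z a < ε₀ by linarith)
    simpa [ha, smul_eq_mul] using this
  refine ⟨ε₀/4, by positivity, lam, hlam, ?_⟩
  intro x hx t ht
  set d : ℝ → ℝ := fun s => dist (φ.Φ s x) a with hd
  have hdc : Continuous d := (φ.contT x).dist continuous_const
  have hd0 : d 0 = dist x a := by simp [hd, φ.init]
  set g : ℝ → ℂ := fun s => φ.Φ s x - a with hg
  have hgd : ∀ s, HasDerivAt g (F (φ.Φ s x)) s := fun s => (φ.hasDeriv x s).sub_const a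
  set h : ℝ → ℝ := fun s => (g s).re * (g s).re + (g s).im * (g s).im with hh
  have hhd2 : ∀ u, h u = d u ^ 2 := by
    intro u
    rw [hh, hd]
    simp only [hg, Complex.dist_eq, Complex.sq_norm, Complex.normSq_apply]
  have hgre : ∀ s, HasDerivAt (fun u => (g u).re) (F (φ.Φ s x)).re s := by
    intro s
    have := (Complex.reCLM.hasFDerivAt (x := g s)).comp_hasDerivAt s (hgd s)
    exact this
  have hgim : ∀ s, HasDerivAt (fun u => (g u).im) (F (φ.Φ s x)).im s := by
    intro s
    have := (Complex.imCLM.hasFDerivAt (x := g s)).comp_hasDerivAt s (hgd s)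
    exact this
  set A : ℝ → ℝ := fun s => (F (φ.Φ s x)).re * (g s).re + (g s).re * (F (φ.Φ s x)).re
      + ((F (φ.Φ s x)).im * (g s).im + (g s).im * (F (φ.Φ s x)).im) with hA
  have hhd : ∀ s, HasDerivAt h (A s) s :=
    fun s => ((hgre s).mul (hgre s)).add ((hgim s).mul (hgim s))
  set ψ : ℝ → ℝ := fun s => h s * exp (-(2 * lam) * s) with hψdef
  have hexp : ∀ s : ℝ, HasDerivAt (fun u : ℝ => exp (-(2 * lam) * u))
      (exp (-(2 * lam) * s) * (-(2 * lam))) s := by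
    intro s
    have h1 : HasDerivAt (fun u : ℝ => -(2 * lam) * u) (-(2 * lam)) s := by
      simpa using (hasDerivAt_id s).const_mul (-(2 * lam))
    simpa using h1.exp
  have hψd : ∀ s, HasDerivAt ψ
      (A s * exp (-(2 * lam) * s) + h s * (exp (-(2 * lam) * s) * (-(2 * lam)))) s :=
    fun s => (hhd s).mul (hexp s)
  have hψc : Continuous ψ := continuous_iff_continuousAt.2 fun s => (hψd s).continuousAt
  -- pointwise differential inequality inside the region
  have hkey : ∀ s : ℝ, d s ≤ ε₀/2 →
      (g s).re * (F (φ.Φ s x)).re + (g s).im * (F (φ.Φ s x)).im ≤ lam * h s := by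
    intro s hzd
    set z := φ.Φ s x with hz
    have hwz : g s = z - a := rfl
    have hdz : dist z a ≤ ε₀/2 := hzd
    have hE := herr z hdz
    set Er : ℂ := F z - (z - a) * c with hEr
    have hFz : F z = (z - a) * c + Er := by rw [hEr]; ring
    have hlhs : (g s).re * (F z).re + (g s).im * (F z).im = ((starRingEnd ℂ) (z - a) * F z).re := by
      rw [hwz]
      simp [Complex.mul_re]
      ring
    rw [hlhs, hFz]
    have hsplit : (starRingEnd ℂ) (z - a) * ((z - a) * c + Er)
        = (Complex.normSq (z - a) : ℂ) * c + (starRingEnd ℂ) (z - a) * Er := by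
      rw [← Complex.mul_conj]
      ring
    rw [hsplit]
    rw [Complex.add_re]
    have h1 : ((Complex.normSq (z - a) : ℂ) * c).re = Complex.normSq (z - a) * c.re :=
      Complex.re_ofReal_mul _ _
    have h2 : ((starRingEnd ℂ) (z - a) * Er).re ≤ η * Complex.normSq (z - a) := by
      have h3 : ((starRingEnd ℂ) (z - a) * Er).re ≤ ‖(starRingEnd ℂ) (z - a) * Er‖ :=
        Complex.re_le_norm _
      have h4 : ‖(starRingEnd ℂ) (z - a) * Er‖ = ‖z - a‖ * ‖Er‖ := by
        rw [norm_mul, RCLike.norm_conj]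
      have h5 : ‖z - a‖ * ‖Er‖ ≤ ‖z - a‖ * (η * ‖z - a‖) :=
        mul_le_mul_of_nonneg_left hE (norm_nonneg _)
      have h6 : ‖z - a‖ * (η * ‖z - a‖) = η * Complex.normSq (z - a) := by
        rw [← Complex.sq_norm]
        ring
      calc ((starRingEnd ℂ) (z - a) * Er).re ≤ ‖z - a‖ * ‖Er‖ := h4 ▸ h3
        _ ≤ _ := h5
        _ = _ := h6
    have hhns : h s = Complex.normSq (z - a) := by
      rw [Complex.normSq_apply]
    rw [hhns, h1]
    have hns : 0 ≤ Complex.normSq (z - a) := Complex.normSq_nonneg _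
    nlinarith [h2]
  -- decay estimate assuming trajectory stays in region
  have gron : ∀ T' ∈ Set.Icc (0:ℝ) t, (∀ s ∈ Set.Icc (0:ℝ) T', d s ≤ ε₀/2) →
      ∀ s ∈ Set.Icc (0:ℝ) T', d s ≤ d 0 * exp (lam * s) := by
    intro T' hT' hin
    have hψanti : AntitoneOn ψ (Set.Icc 0 T') := by
      apply antitoneOn_of_deriv_nonpos (convex_Icc _ _) hψc.continuousOn
      · intro s hs
        exact (hψd s).differentiableAt.differentiableWithinAt
      · intro s hs
        rw [interior_Icc] at hs
        rw [(hψd s).deriv]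
        have hk := hkey s (hin s ⟨hs.1.le, hs.2.le⟩)
        have hexppos := Real.exp_pos (-(2*lam)*s)
        have hAk : A s ≤ 2 * (lam * h s) := by simp only [hA]; nlinarith [hk]
        nlinarith [mul_le_mul_of_nonneg_right hAk hexppos.le]
    intro s hs
    have h1 : ψ s ≤ ψ 0 := hψanti (Set.left_mem_Icc.2 hT'.1) hs hs.1
    have hψ0 : ψ 0 = h 0 := by simp [hψdef]
    have h3 : h s * exp (-(2*lam)*s) ≤ h 0 := by rw [hψ0] at h1; exact h1
    have hE2 : exp (-(2*lam)*s) * exp (lam*s) ^ 2 = 1 := by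
      rw [sq, ← Real.exp_add, ← Real.exp_add, Real.exp_eq_one_iff]
      ring
    have h4 : d s ^ 2 ≤ (d 0 * exp (lam*s)) ^ 2 := by
      have h5 := mul_le_mul_of_nonneg_right h3 (sq_nonneg (exp (lam*s)))
      calc d s ^ 2 = h s * (exp (-(2*lam)*s) * exp (lam*s)^2) := by rw [hE2, hhd2]; ring
        _ = h s * exp (-(2*lam)*s) * exp (lam*s)^2 := by ring
        _ ≤ h 0 * exp (lam*s)^2 := h5
        _ = (d 0 * exp (lam*s))^2 := by rw [hhd2]; ring
    have h5 : (0:ℝ) ≤ d 0 * exp (lam*s) := mul_nonneg dist_nonneg (Real.exp_pos _).le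
    nlinarith [dist_nonneg (x := φ.Φ s x) (y := a), h4, h5]
  have key : ∀ T' ∈ Set.Icc (0:ℝ) t, (∀ s ∈ Set.Icc (0:ℝ) T', d s ≤ ε₀/2) →
      ∀ s ∈ Set.Icc (0:ℝ) T', d s ≤ ε₀/4 := by
    intro T' hT' hin s hs
    have h1 := gron T' hT' hin s hs
    have h2 : exp (lam * s) ≤ 1 :=
      Real.exp_le_one_iff.2 (mul_nonpos_of_nonpos_of_nonneg hlam.le hs.1)
    calc d s ≤ d 0 * exp (lam*s) := h1
      _ ≤ d 0 * 1 := mul_le_mul_of_nonneg_left h2 dist_nonneg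
      _ ≤ ε₀/4 := by rw [mul_one, hd0]; exact hx
  have hboot := bootstrap hdc ht (by linarith : ε₀/4 < ε₀/2) (by rw [hd0]; exact hx) key
  have hfin := gron t ⟨ht, le_rfl⟩ (fun s hs => (hboot s hs).trans (by linarith)) t ⟨ht, le_rfl⟩
  rwa [hd0] at hfin

lemma omegaP_shift (x : ℂ) (r : ℝ) : φ.omegaP (φ.Φ r x) = φ.omegaP x := by
  ext y
  constructor
  · rintro ⟨u, hu, hy⟩
    refine ⟨fun n => u n + r, tendsto_atTop_add_const_right _ r hu, ?_⟩
    have heq : ∀ n, φ.Φ (u n + r) x = φ.Φ (u n) (φ.Φ r x) := fun n => φ.add _ _ _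
    simpa [heq] using hy
  · rintro ⟨u, hu, hy⟩
    refine ⟨fun n => u n - r, tendsto_atTop_add_const_right _ (-r) hu, ?_⟩
    have heq : ∀ n, φ.Φ (u n - r) (φ.Φ r x) = φ.Φ (u n) x := by
      intro n
      rw [← φ.add, sub_add_cancel]
    simpa [heq] using hy

lemma basinP_invariant {a : ℂ} (x : ℂ) (hx : x ∈ φ.basinP a) (r : ℝ) :
    φ.Φ r x ∈ φ.basinP a := by
  show φ.omegaP (φ.Φ r x) = {a}
  rw [φ.omegaP_shift]
  exact hx

lemma mem_basinP_self {a : ℂ} (hfix : ∀ t : ℝ, 0 ≤ t → φ.Φ t a = a) : a ∈ φ.basinP a := by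
  show φ.omegaP a = {a}
  ext y
  simp only [Set.mem_singleton_iff]
  constructor
  · rintro ⟨u, hu, hy⟩
    have hev : (fun n => φ.Φ (u n) a) =ᶠ[atTop] fun _ => a :=
      (hu.eventually_ge_atTop 0).mono fun n hn => hfix _ hn
    exact tendsto_nhds_unique (hy.congr' hev) tendsto_const_nhds
  · intro hy
    rw [hy]
    refine ⟨fun n => n, tendsto_natCast_atTop_atTop, ?_⟩
    have hfa : ∀ n : ℕ, φ.Φ n a = a := fun n => hfix _ (Nat.cast_nonneg n)
    simpa [hfa] using (tendsto_const_nhds : Tendsto (fun _ : ℕ => a) atTop (nhds a))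

theorem basinP_simplyConnected (hF : Differentiable ℂ F) {a : ℂ}
    (h : φ.IsNodeFocusP a) : SimplyConnectedSpace ↥(φ.basinP a) := by
  obtain ⟨ha0, hd0, hdre, ε₁, hε₁, hball⟩ := h
  -- the equilibrium must be attracting
  have hre : (deriv F a).re < 0 := by
    rcases lt_or_gt_of_ne hdre with hlt | hgt
    · exact hlt
    · exfalso
      have harev : (fun z => -F z) a = 0 := by simp [ha0]
      have hrev_re : (deriv (fun z => -F z) a).re < 0 := by
        have hneg : deriv (fun z => -F z) a = -deriv F a := deriv.neg
        rw [hneg, Complex.neg_re]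
        linarith
      obtain ⟨ε₂, hε₂, lam, hlam, hat⟩ := (φ.rev).attract hF.neg harev hrev_re
      set m := min ε₁ ε₂ with hm
      have hmpos : 0 < m := lt_min hε₁ hε₂
      set x := a + (m/2 : ℝ) with hxdef
      have hxa : dist x a = m / 2 := by
        rw [hxdef, dist_eq_norm, add_sub_cancel_left, Complex.norm_real]
        exact abs_of_pos (by positivity)
      have hxball : x ∈ Metric.ball a ε₁ := by
        rw [Metric.mem_ball, hxa]
        calc m/2 < m := by linarith
          _ ≤ ε₁ := min_le_left _ _
      have hxbasin : φ.omegaP x = {a} := hball hxball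
      have haω : a ∈ φ.omegaP x := by rw [hxbasin]; rfl
      obtain ⟨u, hu, hcv⟩ := haω
      obtain ⟨n, hn0, hnd⟩ := ((hu.eventually_ge_atTop 0).and
        (Metric.tendsto_nhds.1 hcv (min (m/2) ε₂) (lt_min (by positivity) hε₂))).exists
      have hback := hat (φ.Φ (u n) x)
        (le_of_lt (lt_of_lt_of_le hnd (min_le_right _ _))) (u n) hn0
      have hid : φ.rev.Φ (u n) (φ.Φ (u n) x) = x := by
        rw [rev_apply, ← φ.add, neg_add_cancel, φ.init]
      rw [hid, hxa] at hback
      have hexple : Real.exp (lam * u n) ≤ 1 :=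
        Real.exp_le_one_iff.2 (mul_nonpos_of_nonpos_of_nonneg hlam.le hn0)
      have hd2 : dist (φ.Φ (u n) x) a < m/2 := lt_of_lt_of_le hnd (min_le_left _ _)
      nlinarith [dist_nonneg (x := φ.Φ (u n) x) (y := a), Real.exp_pos (lam * u n)]
  obtain ⟨ε, hε, lam, hlam, hat⟩ := φ.attract hF ha0 hre
  have hfix : ∀ t : ℝ, 0 ≤ t → φ.Φ t a = a := by
    intro t ht
    have := hat a (by simp [hε.le]) t ht
    simpa using this
  have haN : a ∈ φ.basinP a := φ.mem_basinP_self hfix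
  have hflowc := φ.flow_cont hF
  set N := φ.basinP a with hNdef
  -- the contracting homotopy
  set bigH : unitInterval × ↥N → ℂ := fun p =>
    if (p.1 : ℝ) < 1 then φ.Φ ((p.1 : ℝ) / (1 - (p.1 : ℝ))) (p.2 : ℂ) else a with hbigH
  have hmem : ∀ p, bigH p ∈ N := by
    intro p
    simp only [hbigH]
    by_cases hp : (p.1 : ℝ) < 1
    · rw [if_pos hp]
      exact φ.basinP_invariant _ p.2.2 _
    · rw [if_neg hp]
      exact haN
  have hcont : Continuous bigH := by
    rw [continuous_iff_continuousAt]
    rintro ⟨s, x⟩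
    by_cases hs : (s : ℝ) < 1
    · have hopen : IsOpen {p : unitInterval × ↥N | (p.1 : ℝ) < 1} :=
        isOpen_lt (continuous_subtype_val.comp continuous_fst) continuous_const
      have hev : ∀ᶠ p in nhds (s, x),
          (fun q : unitInterval × ↥N =>
            φ.Φ ((q.1 : ℝ) / (1 - (q.1 : ℝ))) (q.2 : ℂ)) p = bigH p := by
        filter_upwards [hopen.mem_nhds hs] with p hp
        simp only [hbigH]
        rw [if_pos hp]
      have hca : ContinuousAt (fun q : unitInterval × ↥N =>
          φ.Φ ((q.1 : ℝ) / (1 - (q.1 : ℝ))) (q.2 : ℂ)) (s, x) := by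
        have hmap : ContinuousAt (fun q : unitInterval × ↥N =>
            (((q.1 : ℝ) / (1 - (q.1 : ℝ))), (q.2 : ℂ))) (s, x) := by
          apply ContinuousAt.prodMk
          · exact ContinuousAt.div
              (continuous_subtype_val.comp continuous_fst).continuousAt
              (continuous_const.sub (continuous_subtype_val.comp continuous_fst)).continuousAt
              (sub_ne_zero.2 (ne_of_gt hs))
          · exact (continuous_subtype_val.comp continuous_snd).continuousAt
        exact hflowc.continuousAt.comp hmap
      exact hca.congr hev
    · have hs1 : (s : ℝ) = 1 := le_antisymm s.2.2 (not_lt.1 hs)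
      have hval : bigH (s, x) = a := by simp only [hbigH]; rw [if_neg hs]
      unfold ContinuousAt
      rw [hval, Metric.tendsto_nhds]
      intro ε' hε'
      -- a time at which the reference point is close to a
      have hxN : φ.omegaP (x : ℂ) = {a} := x.2
      have haω : a ∈ φ.omegaP (x : ℂ) := by rw [hxN]; rfl
      obtain ⟨u, hu, hcv⟩ := haω
      obtain ⟨n, hn0, hnd⟩ := ((hu.eventually_ge_atTop 0).and
        (Metric.tendsto_nhds.1 hcv (ε/2) (by positivity))).exists
      set T := u n with hTdef
      have hTc : ContinuousAt (fun z : ℂ => φ.Φ T z) (x : ℂ) :=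
        (hflowc.comp (continuous_const.prodMk continuous_id)).continuousAt
      obtain ⟨δ, hδ, hδh⟩ := Metric.continuousAt_iff.1 hTc (ε/2) (by positivity)
      -- the decay horizon
      have hdecay : Tendsto (fun r : ℝ => Real.exp (lam * r)) atTop (nhds 0) := by
        have h1 : Tendsto (fun r : ℝ => (-lam) * r) atTop atTop :=
          Tendsto.const_mul_atTop (by linarith) tendsto_id
        have := Real.tendsto_exp_neg_atTop_nhds_zero.comp h1
        refine this.congr fun r => ?_
        simp [Function.comp, neg_mul]
      rw [Metric.tendsto_nhds] at hdecay
      have hdiv : (0:ℝ) < ε'/ε := by positivity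
      have hTex := hdecay (ε'/ε) hdiv
      rw [eventually_atTop] at hTex
      obtain ⟨T₁, hT₁⟩ := hTex
      set R : ℝ := max T₁ 0 with hRdef
      set S : ℝ := T + R with hSdef
      have hS0 : 0 ≤ S := by
        rw [hSdef]
        have : (0:ℝ) ≤ R := le_max_right _ _
        linarith
      set θ : ℝ := S / (S + 1) with hθdef
      have hS1 : (0:ℝ) < S + 1 := by linarith
      have hθ1 : θ < 1 := by
        rw [hθdef, div_lt_one hS1]
        linarith
      have hθratio : θ / (1 - θ) = S := by
        rw [hθdef]
        have h1 : 1 - S / (S + 1) = 1 / (S + 1) := by field_simp; ring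
        rw [h1]
        field_simp
      -- the two neighborhood conditions
      have hev1 : ∀ᶠ p : unitInterval × ↥N in nhds (s, x), dist ((p.2 : ℂ)) (x : ℂ) < δ := by
        have hc : Continuous fun p : unitInterval × ↥N => dist ((p.2 : ℂ)) (x : ℂ) :=
          (continuous_subtype_val.comp continuous_snd).dist continuous_const
        have hopen : IsOpen {p : unitInterval × ↥N | dist ((p.2 : ℂ)) (x : ℂ) < δ} :=
          isOpen_lt hc continuous_const
        exact hopen.mem_nhds (by simpa using hδ)
      have hev2 : ∀ᶠ p : unitInterval × ↥N in nhds (s, x), θ < (p.1 : ℝ) := by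
        have hopen : IsOpen {p : unitInterval × ↥N | θ < (p.1 : ℝ)} :=
          isOpen_lt continuous_const (continuous_subtype_val.comp continuous_fst)
        exact hopen.mem_nhds (by simpa [hs1] using hθ1)
      filter_upwards [hev1, hev2] with p hp1 hp2
      by_cases hps : (p.1 : ℝ) < 1
      · simp only [hbigH]
        rw [if_pos hps]
        set tt : ℝ := (p.1 : ℝ) / (1 - (p.1 : ℝ)) with httdef
        have h1p : (0:ℝ) < 1 - (p.1 : ℝ) := by linarith
        have h1θ : (0:ℝ) < 1 - θ := by linarith
        have htt : S < tt := by
          rw [← hθratio, httdef, div_lt_div_iff₀ h1θ h1p]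
          nlinarith
        have httT : T ≤ tt := by
          have hRnn : (0:ℝ) ≤ R := le_max_right _ _
          rw [hSdef] at htt
          linarith
        -- the point is close to a at time T
        have hclose : dist (φ.Φ T (p.2 : ℂ)) a ≤ ε := by
          have h1 := hδh hp1
          have h2 := dist_triangle (φ.Φ T (p.2 : ℂ)) (φ.Φ T (x : ℂ)) a
          have h3 : dist (φ.Φ T (x : ℂ)) a < ε/2 := hnd
          have h4 : dist (φ.Φ T (p.2 : ℂ)) (φ.Φ T (x : ℂ)) < ε/2 := h1
          linarith
        have hsplit : φ.Φ tt (p.2 : ℂ) = φ.Φ (tt - T) (φ.Φ T (p.2 : ℂ)) := by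
          rw [← φ.add, sub_add_cancel]
        have hdec := hat (φ.Φ T (p.2 : ℂ)) hclose (tt - T) (by linarith)
        rw [← hsplit] at hdec
        have hexp : Real.exp (lam * (tt - T)) < ε'/ε := by
          have := hT₁ (tt - T) ?_
          · rw [Real.dist_eq, sub_zero, abs_of_pos (Real.exp_pos _)] at this
            exact this
          · have : T₁ ≤ R := le_max_left _ _
            rw [hSdef] at htt
            linarith
        calc dist (φ.Φ tt (p.2 : ℂ)) a
            ≤ dist (φ.Φ T (p.2 : ℂ)) a * Real.exp (lam * (tt - T)) := hdec
          _ ≤ ε * Real.exp (lam * (tt - T)) :=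
              mul_le_mul_of_nonneg_right hclose (Real.exp_pos _).le
          _ < ε * (ε'/ε) := by
              exact mul_lt_mul_of_pos_left hexp hε
          _ = ε' := by field_simp
      · simp only [hbigH]
        rw [if_neg hps]
        simpa using hε'
  -- assemble the contraction
  have hNcontr : ContractibleSpace ↥N := by
    rw [contractible_iff_id_nullhomotopic]
    refine ⟨⟨a, haN⟩, ⟨?_⟩⟩
    refine {
      toContinuousMap := ⟨fun p => ⟨bigH p, hmem p⟩, hcont.subtype_mk _⟩
      map_zero_left := ?_
      map_one_left := ?_ }
    · intro y
      apply Subtype.ext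
      show bigH ((0 : unitInterval), y) = (y : ℂ)
      simp only [hbigH]
      rw [if_pos (by norm_num : ((0 : unitInterval) : ℝ) < 1)]
      simp [φ.init]
    · intro y
      apply Subtype.ext
      show bigH ((1 : unitInterval), y) = a
      simp only [hbigH]
      rw [if_neg (by norm_num : ¬ ((1 : unitInterval) : ℝ) < 1)]
  exact SimplyConnectedSpace.ofContractible _

lemma omegaM_eq_rev_omegaP (x : ℂ) : φ.omegaM x = (φ.rev).omegaP x := by
  ext y
  constructor
  · rintro ⟨u, hu, hy⟩
    refine ⟨fun n => -(u n), tendsto_neg_atBot_atTop.comp hu, ?_⟩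
    simpa [rev_apply] using hy
  · rintro ⟨v, hv, hy⟩
    refine ⟨fun n => -(v n), tendsto_neg_atTop_atBot.comp hv, ?_⟩
    simpa [rev_apply] using hy

lemma basinM_eq_rev_basinP (a : ℂ) : φ.basinM a = (φ.rev).basinP a := by
  ext x
  show φ.omegaM x = {a} ↔ (φ.rev).omegaP x = {a}
  rw [φ.omegaM_eq_rev_omegaP]

end HoloFlow
theorem stmt14 {F : ℂ → ℂ} (φ : HoloFlow F) (hF : Differentiable ℂ F) (hF0 : F ≠ 0)
    (a : ℂ) (N : Set ℂ)
    (hN : (φ.IsNodeFocusP a ∧ N = φ.basinP a) ∨ (φ.IsNodeFocusM a ∧ N = φ.basinM a)) :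
    SimplyConnectedSpace ↥N := by
  rcases hN with ⟨h, rfl⟩ | ⟨h, rfl⟩
  · exact φ.basinP_simplyConnected hF h
  · rw [φ.basinM_eq_rev_basinP]
    apply (φ.rev).basinP_simplyConnected hF.neg
    obtain ⟨h1, h2, h3, ε, hε, hb⟩ := h
    rw [φ.basinM_eq_rev_basinP] at hb
    refine ⟨by simp [h1], ?_, ?_, ε, hε, hb⟩
    · rw [deriv.fun_neg]
      simpa using h2
    · rw [deriv.fun_neg]
      simpa using h3
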